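/- The function f is Fréchet differentiable everywhere, and for every W, Z ∈ ℝ^{d×q} its derivative at W in direction Z equals Tr(Zᵀ Φ(W) W); equivalently, the gradient of f at W is Φ(W) W. -/

import Mathlib

open Matrix BigOperators

attribute [local instance] Matrix.normedAddCommGroup Matrix.normedSpace

section aux

variable {d q : ℕ}

/-- the continuous linear map `Z ↦ trace (Zᵀ * M)` -/
noncomputable def traceCLM (M : Matrix (Fin d) (Fin q) ℝ) :
    Matrix (Fin d) (Fin q) ℝ →L[ℝ] ℝ :=
  LinearMap.toContinuousLinearMap
    { toFun := fun Z => Matrix.trace (Zᵀ * M)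
      map_add' := by intro X Y; simp [Matrix.transpose_add, Matrix.add_mul]
      map_smul' := by intro c X; simp [Matrix.transpose_smul, Matrix.smul_mul] }

@[simp] lemma traceCLM_apply (M Z : Matrix (Fin d) (Fin q) ℝ) :
    traceCLM M Z = Matrix.trace (Zᵀ * M) := rfl

/-- the continuous linear map `W ↦ W a k` -/
noncomputable def entryCLM (a : Fin d) (k : Fin q) :
    Matrix (Fin d) (Fin q) ℝ →L[ℝ] ℝ :=
  LinearMap.toContinuousLinearMap
    { toFun := fun W => W a k
      map_add' := fun _ _ => rfl
      map_smul' := fun _ _ => rfl }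

@[simp] lemma entryCLM_apply (a : Fin d) (k : Fin q) (W : Matrix (Fin d) (Fin q) ℝ) :
    entryCLM a k W = W a k := rfl

lemma trace_expand (A : Matrix (Fin d) (Fin d) ℝ) (W V : Matrix (Fin d) (Fin q) ℝ) :
    Matrix.trace (Wᵀ * A * V) = ∑ k, ∑ a, ∑ b, A a b * (W a k * V b k) := by
  have hk : ∀ k : Fin q, (Wᵀ * A * V) k k = ∑ a, ∑ b, A a b * (W a k * V b k) := by
    intro k
    simp only [Matrix.mul_apply, Matrix.transpose_apply, Finset.sum_mul]
    rw [Finset.sum_comm]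
    exact Finset.sum_congr rfl fun a _ => Finset.sum_congr rfl fun b _ => by ring
  simp only [Matrix.trace, Matrix.diag]
  exact Finset.sum_congr rfl fun k _ => hk k

lemma quad_hasFDerivAt (A : Matrix (Fin d) (Fin d) ℝ) (hA : Aᵀ = A)
    (W : Matrix (Fin d) (Fin q) ℝ) :
    HasFDerivAt (fun V : Matrix (Fin d) (Fin q) ℝ => Matrix.trace (Vᵀ * A * V))
      (traceCLM ((2 : ℝ) • (A * W))) W := by
  have h : HasFDerivAt
      (fun V : Matrix (Fin d) (Fin q) ℝ => ∑ k, ∑ a, ∑ b, A a b * (V a k * V b k))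
      (∑ k : Fin q, ∑ a : Fin d, ∑ b : Fin d,
        A a b • (W a k • entryCLM b k + W b k • entryCLM a k)) W := by
    refine HasFDerivAt.fun_sum fun k _ => HasFDerivAt.fun_sum fun a _ => HasFDerivAt.fun_sum fun b _ => ?_
    exact ((entryCLM a k).hasFDerivAt.mul (entryCLM b k).hasFDerivAt).const_mul (A a b)
  have hfun : (fun V : Matrix (Fin d) (Fin q) ℝ => Matrix.trace (Vᵀ * A * V)) =
      (fun V => ∑ k, ∑ a, ∑ b, A a b * (V a k * V b k)) := by
    funext V; exact trace_expand A V V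
  rw [hfun]
  refine h.congr_fderiv ?_
  ext Z
  simp only [ContinuousLinearMap.coe_sum', Finset.sum_apply, ContinuousLinearMap.add_apply,
    ContinuousLinearMap.coe_smul', Pi.smul_apply, entryCLM_apply, smul_eq_mul,
    traceCLM_apply]
  have hrhs : Matrix.trace (Zᵀ * ((2 : ℝ) • (A * W))) =
      2 * ∑ k, ∑ a, ∑ b, A a b * (Z a k * W b k) := by
    rw [Matrix.mul_smul, Matrix.trace_smul, ← Matrix.mul_assoc, trace_expand]
    simp
  rw [hrhs]
  have hswap : ∀ k : Fin q,
      (∑ a, ∑ b, A a b * (W a k * Z b k)) = ∑ a, ∑ b, A a b * (Z a k * W b k) := by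
    intro k
    rw [Finset.sum_comm]
    refine Finset.sum_congr rfl fun a _ => Finset.sum_congr rfl fun b _ => ?_
    have hab : A b a = A a b := by
      nth_rewrite 1 [← hA]
      rw [Matrix.transpose_apply]
    rw [hab]; ring
  calc (∑ k, ∑ a, ∑ b, A a b * (W a k * Z b k + W b k * Z a k))
      = ∑ k, ((∑ a, ∑ b, A a b * (W a k * Z b k)) +
          ∑ a, ∑ b, A a b * (W b k * Z a k)) := by
        refine Finset.sum_congr rfl fun k _ => ?_
        rw [← Finset.sum_add_distrib]
        refine Finset.sum_congr rfl fun a _ => ?_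
        rw [← Finset.sum_add_distrib]
        refine Finset.sum_congr rfl fun b _ => ?_
        ring
    _ = ∑ k, (2 * ∑ a, ∑ b, A a b * (Z a k * W b k)) := by
        refine Finset.sum_congr rfl fun k _ => ?_
        rw [hswap k]
        have : (∑ a, ∑ b, A a b * (W b k * Z a k)) =
            ∑ a, ∑ b, A a b * (Z a k * W b k) := by
          refine Finset.sum_congr rfl fun a _ => Finset.sum_congr rfl fun b _ => by ring
        rw [this]; ring
    _ = 2 * ∑ k, ∑ a, ∑ b, A a b * (Z a k * W b k) := by rw [Finset.mul_sum]

end aux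

theorem stmt1 {n d q : ℕ}
    (A : Fin n → Fin n → Matrix (Fin d) (Fin d) ℝ)
    (hA : ∀ i j, (A i j)ᵀ = A i j)
    (γ : Fin n → Fin n → ℝ) (σ : ℝ) (hσ : 0 < σ)
    (f : Matrix (Fin d) (Fin q) ℝ → ℝ)
    (hf : ∀ W, f W = -∑ i, ∑ j, γ i j *
        Real.exp (-(Matrix.trace (Wᵀ * A i j * W)) / (2 * σ ^ 2)))
    (Φ : Matrix (Fin d) (Fin q) ℝ → Matrix (Fin d) (Fin d) ℝ)
    (hΦ : ∀ W, Φ W = ∑ i, ∑ j, (γ i j / σ ^ 2 *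
        Real.exp (-(Matrix.trace (Wᵀ * A i j * W)) / (2 * σ ^ 2))) • A i j) :
    ∀ W, ∃ f' : Matrix (Fin d) (Fin q) ℝ →L[ℝ] ℝ,
      HasFDerivAt f f' W ∧
      ∀ Z, f' Z = Matrix.trace (Zᵀ * Φ W * W) := by
  intro W
  have hσ2 : σ ^ 2 ≠ 0 := pow_ne_zero 2 hσ.ne'
  refine ⟨traceCLM (Φ W * W), ?_, fun Z => by rw [traceCLM_apply, Matrix.mul_assoc]⟩
  have hfe : f = fun V => -∑ i, ∑ j, γ i j *
      Real.exp (-(Matrix.trace (Vᵀ * A i j * V)) / (2 * σ ^ 2)) := funext hf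
  rw [hfe]
  set c : ℝ := -(2 * σ ^ 2)⁻¹ with hc
  have hterm : ∀ i j : Fin n, HasFDerivAt
      (fun V : Matrix (Fin d) (Fin q) ℝ =>
        γ i j * Real.exp (-(Matrix.trace (Vᵀ * A i j * V)) / (2 * σ ^ 2)))
      ((γ i j) • ((Real.exp (-(Matrix.trace (Wᵀ * A i j * W)) / (2 * σ ^ 2))) •
        (c • traceCLM ((2 : ℝ) • (A i j * W))))) W := by
    intro i j
    have hg : HasFDerivAt
        (fun V : Matrix (Fin d) (Fin q) ℝ =>
          -(Matrix.trace (Vᵀ * A i j * V)) / (2 * σ ^ 2))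
        (c • traceCLM ((2 : ℝ) • (A i j * W))) W := by
      have := (quad_hasFDerivAt (A i j) (hA i j) W).const_mul c
      refine this.congr_of_eventuallyEq (Filter.Eventually.of_forall fun V => ?_)
      rw [hc]; ring
    exact (hg.exp).const_mul (γ i j)
  have h : HasFDerivAt
      (fun V : Matrix (Fin d) (Fin q) ℝ => -∑ i, ∑ j, γ i j *
        Real.exp (-(Matrix.trace (Vᵀ * A i j * V)) / (2 * σ ^ 2)))
      (-(∑ i : Fin n, ∑ j : Fin n, (γ i j) •
        ((Real.exp (-(Matrix.trace (Wᵀ * A i j * W)) / (2 * σ ^ 2))) •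
          (c • traceCLM ((2 : ℝ) • (A i j * W)))))) W :=
    (HasFDerivAt.fun_sum fun i _ => HasFDerivAt.fun_sum fun j _ => hterm i j).neg
  refine h.congr_fderiv ?_
  ext Z
  simp only [ContinuousLinearMap.neg_apply, ContinuousLinearMap.coe_sum', Finset.sum_apply,
    ContinuousLinearMap.coe_smul', Pi.smul_apply, smul_eq_mul, traceCLM_apply]
  rw [hΦ W]
  rw [Matrix.sum_mul, Matrix.mul_sum, Matrix.trace_sum, ← Finset.sum_neg_distrib]
  refine Finset.sum_congr rfl fun i _ => ?_
  rw [Matrix.sum_mul, Matrix.mul_sum, Matrix.trace_sum, ← Finset.sum_neg_distrib]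
  refine Finset.sum_congr rfl fun j _ => ?_
  rw [Matrix.smul_mul, Matrix.mul_smul, Matrix.trace_smul, Matrix.mul_smul,
    Matrix.trace_smul]
  rw [hc]
  field_simp
  simp only [smul_eq_mul]
  field_simp
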